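/- Let m > 0, α > 0 and β ∈ (0,1). Suppose Z is a real-valued random variable with Z ≥ 0 almost surely such that for all t > 0, (1−α)·exp(−t/((1−β)m)) ≤ P(Z ≥ t) ≤ (1+α)·exp(−t/((1+β)m)). Then ∫₀^∞ |P(Z ≥ t) − exp(−t/m)| dt ≤ 2(α+β)·m. Equivalently, the L¹ Wasserstein distance between the law of Z and the exponential distribution with mean m is at most 2(α+β)·m. -/

import Mathlib

open MeasureTheory

lemma integral_exp_neg_div_Ioi_zero {c : ℝ} (hc : 0 < c) :
    ∫ x in Set.Ioi (0 : ℝ), Real.exp (-x / c) = c := by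
  have hb : 0 < c⁻¹ := inv_pos.mpr hc
  have h := integral_comp_mul_left_Ioi (fun x => Real.exp (-x)) 0 hb
  simp only [mul_zero, integral_exp_neg_Ioi, neg_zero, Real.exp_zero, smul_eq_mul,
    mul_one, inv_inv] at h
  have heq : ∀ x : ℝ, -x / c = -(c⁻¹ * x) := fun x => by
    rw [neg_div, div_eq_inv_mul]
  simp_rw [heq]
  exact h

lemma integrable_exp_neg_div {c : ℝ} (hc : 0 < c) :
    IntegrableOn (fun x => Real.exp (-x / c)) (Set.Ioi (0 : ℝ)) := by
  have := exp_neg_integrableOn_Ioi 0 (inv_pos.mpr hc)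
  refine this.congr_fun (fun x _ => ?_) measurableSet_Ioi
  dsimp only
  rw [neg_div, div_eq_mul_inv, neg_mul, mul_comm]

/-- Lemma: a random variable with distribution `Exp(m, α, β)` is within `L¹` Wasserstein
distance `2(α+β)m` of the exponential distribution with mean `m`, where the Wasserstein
distance is expressed as the integral of the absolute difference of tail probabilities. -/
theorem wasserstein_exp_approx {Ω : Type*} [MeasurableSpace Ω] (μ : Measure Ω)
    [IsProbabilityMeasure μ] (Z : Ω → ℝ) (m α β : ℝ)
    (hm : 0 < m) (hα : 0 < α) (hβ : β ∈ Set.Ioo (0 : ℝ) 1)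
    (hZ0 : ∀ᵐ ω ∂μ, 0 ≤ Z ω)
    (hZ : ∀ t : ℝ, 0 < t →
      (1 - α) * Real.exp (-t / ((1 - β) * m)) ≤ (μ {ω | t ≤ Z ω}).toReal ∧
      (μ {ω | t ≤ Z ω}).toReal ≤ (1 + α) * Real.exp (-t / ((1 + β) * m))) :
    ∫ t in Set.Ioi (0 : ℝ), |(μ {ω | t ≤ Z ω}).toReal - Real.exp (-t / m)| ≤
      2 * (α + β) * m := by
  obtain ⟨hβ0, hβ1⟩ := hβ
  have hm1 : 0 < (1 - β) * m := mul_pos (by linarith) hm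
  have hm2 : 0 < (1 + β) * m := mul_pos (by linarith) hm
  set F : ℝ → ℝ := fun t => (μ {ω | t ≤ Z ω}).toReal with hF
  set g : ℝ → ℝ := fun t =>
      (1 + α) * Real.exp (-t / ((1 + β) * m)) - (1 - α) * Real.exp (-t / ((1 - β) * m)) with hg
  -- pointwise bound
  have hpt : ∀ t ∈ Set.Ioi (0 : ℝ), |F t - Real.exp (-t / m)| ≤ g t := by
    intro t ht
    have ht : 0 < t := ht
    obtain ⟨h1, h2⟩ := hZ t ht
    have e1 : Real.exp (-t / ((1 - β) * m)) ≤ Real.exp (-t / m) := by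
      apply Real.exp_le_exp.2
      rw [div_le_div_iff₀ hm1 hm]
      nlinarith [mul_pos (mul_pos ht hβ0) hm]
    have e2 : Real.exp (-t / m) ≤ Real.exp (-t / ((1 + β) * m)) := by
      apply Real.exp_le_exp.2
      rw [div_le_div_iff₀ hm hm2]
      nlinarith [mul_pos (mul_pos ht hβ0) hm]
    have p1 : (0:ℝ) < Real.exp (-t / ((1 - β) * m)) := Real.exp_pos _
    have p2 : (0:ℝ) < Real.exp (-t / ((1 + β) * m)) := Real.exp_pos _
    rw [abs_le]
    constructor
    · simp only [hg]; nlinarith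
    · simp only [hg]; nlinarith
  -- integrability of g pieces
  have hi1 := (integrable_exp_neg_div hm2).const_mul (1 + α)
  have hi2 := (integrable_exp_neg_div hm1).const_mul (1 - α)
  have hig : IntegrableOn g (Set.Ioi (0 : ℝ)) := hi1.sub hi2
  -- measurability of F
  have hFanti : Antitone F := by
    intro s t hst
    apply ENNReal.toReal_mono (measure_ne_top μ _)
    exact measure_mono (fun ω hω => le_trans hst hω)
  have hFmeas : Measurable F := hFanti.measurable
  have hif : IntegrableOn (fun t => |F t - Real.exp (-t / m)|) (Set.Ioi (0 : ℝ)) := by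
    have hmeas : AEStronglyMeasurable (fun t => |F t - Real.exp (-t / m)|)
        (volume.restrict (Set.Ioi (0:ℝ))) :=
      ((hFmeas.sub (by fun_prop)).abs).aestronglyMeasurable
    refine Integrable.mono' hig hmeas ?_
    filter_upwards [ae_restrict_mem measurableSet_Ioi] with t ht
    rw [Real.norm_eq_abs, abs_abs]
    exact hpt t ht
  have hle : ∫ t in Set.Ioi (0 : ℝ), |F t - Real.exp (-t / m)| ≤ ∫ t in Set.Ioi (0:ℝ), g t :=
    setIntegral_mono_on hif hig measurableSet_Ioi hpt
  have hgval : ∫ t in Set.Ioi (0:ℝ), g t = 2 * (α + β) * m := by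
    rw [integral_sub hi1 hi2, integral_const_mul, integral_const_mul,
      integral_exp_neg_div_Ioi_zero hm2, integral_exp_neg_div_Ioi_zero hm1]
    ring
  calc ∫ t in Set.Ioi (0 : ℝ), |F t - Real.exp (-t / m)| ≤ ∫ t in Set.Ioi (0:ℝ), g t := hle
    _ = 2 * (α + β) * m := hgval
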